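/- Proposition 2, case 1, for the reduced formulation: if P ≤ 2, then every extreme point (z, v) of the polyhedron Q is integral, i.e., z_ℓ ∈ {0, 1} for every ℓ ∈ Fin L and v_{p,k} is an integer for every p ∈ Fin P and k ∈ Fin K_p. -/

import Mathlib

open Finset

lemma aux_sum_int {ι : Type*} [DecidableEq ι] (A : Finset ι) (z : ι → ℝ)
    (h : ∀ i ∈ A, z i = 0 ∨ z i = 1) : ∃ n : ℤ, ∑ i ∈ A, z i = (n : ℝ) := by
  classical
  refine ⟨∑ i ∈ A, if z i = 1 then 1 else 0, ?_⟩
  rw [Int.cast_sum]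
  refine Finset.sum_congr rfl fun i hi => ?_
  rcases h i hi with h0 | h0 <;> simp [h0]

lemma aux_card_ne_one {ι : Type*} [Fintype ι] [DecidableEq ι] (z : ι → ℝ)
    (hz : ∀ i, 0 ≤ z i ∧ z i ≤ 1) (A : Finset ι)
    (hA : ∃ n : ℤ, ∑ i ∈ A, z i = (n : ℝ)) :
    (A.filter (fun i => z i ≠ 0 ∧ z i ≠ 1)).card ≠ 1 := by
  classical
  intro h1
  obtain ⟨n, hn⟩ := hA
  obtain ⟨i0, hi0⟩ := Finset.card_eq_one.mp h1
  have hsplit := Finset.sum_filter_add_sum_filter_not A (fun i => z i ≠ 0 ∧ z i ≠ 1) z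
  have h2 : ∑ i ∈ A.filter (fun i => z i ≠ 0 ∧ z i ≠ 1), z i = z i0 := by
    rw [hi0, Finset.sum_singleton]
  obtain ⟨m, hm⟩ : ∃ m : ℤ, ∑ i ∈ A.filter (fun i => ¬(z i ≠ 0 ∧ z i ≠ 1)), z i = (m : ℝ) := by
    refine aux_sum_int _ _ fun i hi => ?_
    have := (Finset.mem_filter.mp hi).2
    tauto
  have hi0mem : i0 ∈ A.filter (fun i => z i ≠ 0 ∧ z i ≠ 1) := by rw [hi0]; exact Finset.mem_singleton_self i0
  have hfrac := (Finset.mem_filter.mp hi0mem).2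
  have hb := hz i0
  have hzi0 : z i0 = ((n - m : ℤ) : ℝ) := by push_cast; linarith [hsplit, h2, hm, hn]
  have h01 : 0 < z i0 := lt_of_le_of_ne hb.1 (Ne.symm hfrac.1)
  have h02 : z i0 < 1 := lt_of_le_of_ne hb.2 hfrac.2
  rw [hzi0] at h01 h02
  have : (0 : ℤ) < n - m := by exact_mod_cast h01
  have : (n - m : ℤ) < 1 := by exact_mod_cast h02
  omega

lemma aux_kernel {ι α β : Type*} [Fintype ι] [DecidableEq ι] [Fintype α] [Fintype β]
    [DecidableEq α] [DecidableEq β]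
    (F : Finset ι) (hF : F.Nonempty) (f : ι → α) (g : ι → β) (b0 : β)
    (hf : ∀ a, (F.filter (fun i => f i = a)).card ≠ 1)
    (hg : ∀ b, b ≠ b0 → (F.filter (fun i => g i = b)).card ≠ 1) :
    ∃ δ : ι → ℝ, δ ≠ 0 ∧ (∀ i, i ∉ F → δ i = 0) ∧
      (∀ a, ∑ i ∈ Finset.univ.filter (fun i => f i = a), δ i = 0) ∧
      (∀ b, ∑ i ∈ Finset.univ.filter (fun i => g i = b), δ i = 0) := by
  classical
  set n := F.card with hn
  have hn1 : 1 ≤ n := Finset.card_pos.mpr hF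
  set A := F.image f with hAdef
  set B := (F.filter (fun i => g i ≠ b0)).image g with hBdef
  -- cardinality bounds
  have hA2 : 2 * A.card ≤ n := by
    have hsum : n = ∑ a ∈ A, (F.filter (fun i => f i = a)).card :=
      Finset.card_eq_sum_card_fiberwise (fun i hi => Finset.mem_image_of_mem f hi)
    have : ∑ a ∈ A, 2 ≤ ∑ a ∈ A, (F.filter (fun i => f i = a)).card := by
      refine Finset.sum_le_sum fun a ha => ?_
      obtain ⟨i, hi, rfl⟩ := Finset.mem_image.mp ha
      have hpos : 0 < (F.filter (fun j => f j = f i)).card :=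
        Finset.card_pos.mpr ⟨i, Finset.mem_filter.mpr ⟨hi, rfl⟩⟩
      have := hf (f i)
      omega
    simpa [Finset.sum_const, mul_comm] using le_trans (le_of_eq (by simp [Finset.sum_const, mul_comm])) (this.trans (le_of_eq hsum.symm))
  have hB2 : 2 * B.card ≤ (F.filter (fun i => g i ≠ b0)).card := by
    have hsum : (F.filter (fun i => g i ≠ b0)).card
        = ∑ b ∈ B, ((F.filter (fun i => g i ≠ b0)).filter (fun i => g i = b)).card :=
      Finset.card_eq_sum_card_fiberwise (fun i hi => Finset.mem_image_of_mem g hi)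
    have : ∑ b ∈ B, 2 ≤ ∑ b ∈ B, ((F.filter (fun i => g i ≠ b0)).filter (fun i => g i = b)).card := by
      refine Finset.sum_le_sum fun b hb => ?_
      obtain ⟨i, hi, rfl⟩ := Finset.mem_image.mp hb
      have hib0 : g i ≠ b0 := (Finset.mem_filter.mp hi).2
      have heq : (F.filter (fun j => g j ≠ b0)).filter (fun j => g j = g i)
          = F.filter (fun j => g j = g i) := by
        ext j
        simp only [Finset.mem_filter, and_assoc]
        constructor
        · rintro ⟨h1, _, h3⟩; exact ⟨h1, h3⟩
        · rintro ⟨h1, h3⟩; exact ⟨h1, h3 ▸ hib0, h3⟩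
      rw [heq]
      have hpos : 0 < (F.filter (fun j => g j = g i)).card :=
        Finset.card_pos.mpr ⟨i, Finset.mem_filter.mpr ⟨(Finset.mem_filter.mp hi).1, rfl⟩⟩
      have := hg (g i) hib0
      omega
    simpa [Finset.sum_const, mul_comm] using this.trans (le_of_eq hsum.symm)
  have hBF : (F.filter (fun i => g i ≠ b0)).card ≤ n :=
    Finset.card_le_card (Finset.filter_subset _ _)
  -- the linear map
  let D := ({i // i ∈ F} → ℝ)
  let C := ({a // a ∈ A} → ℝ) × ({b // b ∈ B} → ℝ)
  let Φ : D →ₗ[ℝ] C :=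
  { toFun := fun δ =>
      (fun a => ∑ i ∈ Finset.univ.filter (fun i : {i // i ∈ F} => f i.1 = a.1), δ i,
       fun b => ∑ i ∈ Finset.univ.filter (fun i : {i // i ∈ F} => g i.1 = b.1), δ i),
    map_add' := by
      intro x y
      refine Prod.ext ?_ ?_ <;> funext t <;> exact Finset.sum_add_distrib
    map_smul' := by
      intro m x
      refine Prod.ext ?_ ?_ <;> funext t <;> exact (Finset.mul_sum _ _ _).symm }
  have hD : Module.finrank ℝ D = n := by
    simp only [D, Module.finrank_fintype_fun_eq_card, Fintype.card_coe, hn]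
  have hC : Module.finrank ℝ C = A.card + B.card := by
    simp only [C, Module.finrank_prod, Module.finrank_fintype_fun_eq_card, Fintype.card_coe]
  -- kernel element
  have hker : ∃ δ₀ : D, δ₀ ≠ 0 ∧ Φ δ₀ = 0 := by
    by_cases hb0 : ∃ i ∈ F, g i = b0
    · -- b0 fiber nonempty
      obtain ⟨i, hiF, hib⟩ := hb0
      have hsub : F.filter (fun j => g j ≠ b0) ⊆ F.erase i := by
        intro j hj
        have := Finset.mem_filter.mp hj
        exact Finset.mem_erase.mpr ⟨fun h => this.2 (h ▸ hib), this.1⟩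
      have hlt : (F.filter (fun j => g j ≠ b0)).card ≤ n - 1 := by
        have := Finset.card_le_card hsub
        rw [Finset.card_erase_of_mem hiF] at this
        omega
      have hdim : Module.finrank ℝ C < Module.finrank ℝ D := by rw [hC, hD]; omega
      have hninj : ¬ Function.Injective Φ := fun hinj =>
        absurd (LinearMap.finrank_le_finrank_of_injective hinj) (by omega)
      have hne : LinearMap.ker Φ ≠ ⊥ := fun h => hninj (LinearMap.ker_eq_bot.mp h)
      obtain ⟨δ₀, hδ₀m, hδ₀⟩ := Submodule.exists_mem_ne_zero_of_ne_bot hne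
      exact ⟨δ₀, hδ₀, LinearMap.mem_ker.mp hδ₀m⟩
    · -- b0 fiber empty: use the total-sum relation
      push_neg at hb0
      let φ : C →ₗ[ℝ] ℝ :=
      { toFun := fun u => (∑ a, u.1 a) - (∑ b, u.2 b),
        map_add' := by
          intro x y
          have e1 : (∑ a : {a // a ∈ A}, (x + y).1 a)
              = (∑ a : {a // a ∈ A}, x.1 a) + ∑ a : {a // a ∈ A}, y.1 a :=
            Finset.sum_add_distrib
          have e2 : (∑ b : {b // b ∈ B}, (x + y).2 b)
              = (∑ b : {b // b ∈ B}, x.2 b) + ∑ b : {b // b ∈ B}, y.2 b :=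
            Finset.sum_add_distrib
          show _ - _ = _
          rw [e1, e2]; ring
        map_smul' := by
          intro m x
          have e1 : (∑ a : {a // a ∈ A}, (m • x).1 a)
              = m * ∑ a : {a // a ∈ A}, x.1 a := (Finset.mul_sum _ _ _).symm
          have e2 : (∑ b : {b // b ∈ B}, (m • x).2 b)
              = m * ∑ b : {b // b ∈ B}, x.2 b := (Finset.mul_sum _ _ _).symm
          show _ - _ = _
          rw [e1, e2, RingHom.id_apply, smul_eq_mul]; ring }
      have hrange : LinearMap.range Φ ≤ LinearMap.ker φ := by
        rintro _ ⟨δ, rfl⟩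
        rw [LinearMap.mem_ker]
        have h1 : (∑ a : {a // a ∈ A}, ∑ i ∈ Finset.univ.filter
            (fun i : {i // i ∈ F} => f i.1 = a.1), δ i) = ∑ i : {i // i ∈ F}, δ i := by
          rw [Finset.sum_coe_sort A
            (fun a => ∑ i ∈ Finset.univ.filter (fun i : {i // i ∈ F} => f i.1 = a), δ i)]
          exact Finset.sum_fiberwise_of_maps_to (fun i _ => Finset.mem_image_of_mem f i.2) δ
        have h2 : (∑ b : {b // b ∈ B}, ∑ i ∈ Finset.univ.filter
            (fun i : {i // i ∈ F} => g i.1 = b.1), δ i) = ∑ i : {i // i ∈ F}, δ i := by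
          rw [Finset.sum_coe_sort B
            (fun b => ∑ i ∈ Finset.univ.filter (fun i : {i // i ∈ F} => g i.1 = b), δ i)]
          refine Finset.sum_fiberwise_of_maps_to (fun i _ => ?_) δ
          exact Finset.mem_image_of_mem g (Finset.mem_filter.mpr ⟨i.2, hb0 i.1 i.2⟩)
        show (∑ a : {a // a ∈ A}, (Φ δ).1 a) - (∑ b : {b // b ∈ B}, (Φ δ).2 b) = (0:ℝ)
        have hfst : ∀ a : {a // a ∈ A}, (Φ δ).1 a
            = ∑ i ∈ Finset.univ.filter (fun i : {i // i ∈ F} => f i.1 = a.1), δ i := fun a => rfl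
        have hsnd : ∀ b : {b // b ∈ B}, (Φ δ).2 b
            = ∑ i ∈ Finset.univ.filter (fun i : {i // i ∈ F} => g i.1 = b.1), δ i := fun b => rfl
        simp only [hfst, hsnd]
        rw [h1, h2, sub_self]
      have hAne : A.Nonempty := hF.image f
      have hAcpos : 0 < A.card := Finset.card_pos.mpr hAne
      have hsurj : Function.Surjective φ := by
        intro r
        refine ⟨((fun _ => r / A.card), 0), ?_⟩
        show (∑ _a : {a // a ∈ A}, r / (A.card:ℝ)) - (∑ b : {b // b ∈ B}, (0:ℝ)) = r
        rw [Finset.sum_const, Finset.sum_const]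
        simp [Fintype.card_coe]
        field_simp
      have hkφ : Module.finrank ℝ ↥(LinearMap.ker φ) + 1 = A.card + B.card := by
        have := LinearMap.finrank_range_add_finrank_ker φ
        rw [LinearMap.range_eq_top.mpr hsurj, finrank_top, hC] at this
        simp only [Module.finrank_self] at this
        omega
      have hrk : Module.finrank ℝ ↥(LinearMap.range Φ) ≤ A.card + B.card - 1 := by
        have := Submodule.finrank_mono hrange
        omega
      have hrn := LinearMap.finrank_range_add_finrank_ker Φ
      rw [hD] at hrn
      have hkerpos : 0 < Module.finrank ℝ ↥(LinearMap.ker Φ) := by omega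
      have hne : LinearMap.ker Φ ≠ ⊥ := by
        intro h
        rw [h, finrank_bot] at hkerpos
        omega
      obtain ⟨δ₀, hδ₀m, hδ₀⟩ := Submodule.exists_mem_ne_zero_of_ne_bot hne
      exact ⟨δ₀, hδ₀, LinearMap.mem_ker.mp hδ₀m⟩
  obtain ⟨δ₀, hδ₀ne, hδ₀ker⟩ := hker
  -- extend to ι
  let δ : ι → ℝ := fun i => if h : i ∈ F then δ₀ ⟨i, h⟩ else 0
  have hδcoe : ∀ i : {i // i ∈ F}, δ i.1 = δ₀ i := by
    intro i; simp only [δ, dif_pos i.2]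
  have hconv : ∀ (P : ι → Prop) [DecidablePred P],
      ∑ i ∈ Finset.univ.filter P, δ i
        = ∑ i ∈ Finset.univ.filter (fun i : {i // i ∈ F} => P i.1), δ₀ i := by
    intro P _
    rw [Finset.univ_eq_attach]
    have hsub : F.filter P ⊆ Finset.univ.filter P := by
      intro i hi; exact Finset.mem_filter.mpr ⟨Finset.mem_univ i, (Finset.mem_filter.mp hi).2⟩
    have h0 : ∀ i ∈ Finset.univ.filter P, i ∉ F.filter P → δ i = 0 := by
      intro i hi hni
      have hiP := (Finset.mem_filter.mp hi).2
      have : i ∉ F := fun h => hni (Finset.mem_filter.mpr ⟨h, hiP⟩)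
      simp only [δ, dif_neg this]
    rw [← Finset.sum_subset hsub h0]
    rw [Finset.sum_filter, ← Finset.sum_attach F (fun i => if P i then δ i else 0),
      ← Finset.sum_filter]
    exact Finset.sum_congr rfl fun i _ => hδcoe i
  have hfa : ∀ a, ∑ i ∈ Finset.univ.filter (fun i => f i = a), δ i = 0 := by
    intro a
    rw [hconv]
    by_cases ha : a ∈ A
    · have := congrFun (congrArg Prod.fst hδ₀ker) ⟨a, ha⟩
      exact this
    · rw [Finset.filter_eq_empty_iff.mpr, Finset.sum_empty]
      intro i _
      exact fun h => ha (h ▸ Finset.mem_image_of_mem f i.2)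
  have hgb : ∀ b, ∑ i ∈ Finset.univ.filter (fun i => g i = b), δ i = 0 := by
    have hgb' : ∀ b, b ≠ b0 → ∑ i ∈ Finset.univ.filter (fun i => g i = b), δ i = 0 := by
      intro b hb
      rw [hconv]
      by_cases hbB : b ∈ B
      · exact congrFun (congrArg Prod.snd hδ₀ker) ⟨b, hbB⟩
      · rw [Finset.filter_eq_empty_iff.mpr, Finset.sum_empty]
        intro i _
        intro h
        exact hbB (h ▸ Finset.mem_image_of_mem g
          (Finset.mem_filter.mpr ⟨i.2, h ▸ hb⟩))
    intro b
    by_cases hb : b = b0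
    · subst hb
      have htot : ∑ i, δ i = 0 := by
        rw [← Finset.sum_fiberwise Finset.univ f δ]
        exact Finset.sum_eq_zero fun a _ => hfa a
      have := Finset.sum_fiberwise Finset.univ g δ
      rw [htot] at this
      have hsingle : ∑ b' : β, (∑ i ∈ Finset.univ.filter (fun i => g i = b'), δ i)
          = ∑ i ∈ Finset.univ.filter (fun i => g i = b), δ i := by
        refine Finset.sum_eq_single_of_mem b (Finset.mem_univ b) fun b' _ hb' => hgb' b' hb'
      rw [hsingle] at this
      exact this
    · exact hgb' b hb
  refine ⟨δ, ?_, fun i hi => by simp only [δ, dif_neg hi], hfa, hgb⟩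
  intro h
  obtain ⟨i, hi⟩ := Function.ne_iff.mp hδ₀ne
  apply hi
  have := congrFun h i.1
  rw [hδcoe i] at this
  exact this

/-- classification of a unit: its category if that category is tight, else `none`. -/
noncomputable def covf {L Kp : ℕ} (cp : Fin L → Fin Kp) (Np : Fin Kp → ℕ) (z : Fin L → ℝ)
    (ℓ : Fin L) : Option (Fin Kp) :=
  if (∑ ℓ' ∈ Finset.univ.filter (fun ℓ' => cp ℓ' = cp ℓ), z ℓ') = (Np (cp ℓ) : ℝ)
  then some (cp ℓ) else none

lemma covf_eq_some {L Kp : ℕ} (cp : Fin L → Fin Kp) (Np : Fin Kp → ℕ) (z : Fin L → ℝ)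
    (ℓ : Fin L) (k : Fin Kp) :
    covf cp Np z ℓ = some k ↔ cp ℓ = k ∧
      (∑ ℓ' ∈ Finset.univ.filter (fun ℓ' => cp ℓ' = k), z ℓ') = (Np k : ℝ) := by
  unfold covf
  constructor
  · intro h
    split_ifs at h with hc
    have hk := Option.some.inj h
    subst hk
    exact ⟨rfl, hc⟩
  · rintro ⟨rfl, ht⟩
    rw [if_pos ht]

lemma covf_eq_none {L Kp : ℕ} (cp : Fin L → Fin Kp) (Np : Fin Kp → ℕ) (z : Fin L → ℝ)
    (ℓ : Fin L) :
    covf cp Np z ℓ = none ↔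
      ¬ ((∑ ℓ' ∈ Finset.univ.filter (fun ℓ' => cp ℓ' = cp ℓ), z ℓ') = (Np (cp ℓ) : ℝ)) := by
  unfold covf
  split_ifs with h
  · simp [h]
  · simp [h]

lemma covf_tight_filter {L Kp : ℕ} (cp : Fin L → Fin Kp) (Np : Fin Kp → ℕ) (z : Fin L → ℝ)
    (k : Fin Kp)
    (hk : (∑ ℓ' ∈ Finset.univ.filter (fun ℓ' => cp ℓ' = k), z ℓ') = (Np k : ℝ)) :
    Finset.univ.filter (fun ℓ => covf cp Np z ℓ = some k)
      = Finset.univ.filter (fun ℓ => cp ℓ = k) := by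
  ext ℓ
  simp only [Finset.mem_filter, Finset.mem_univ, true_and, covf_eq_some]
  exact ⟨fun h => h.1, fun h => ⟨h, hk⟩⟩

lemma covf_int_sums {L Kp T : ℕ} (cp : Fin L → Fin Kp) (Np : Fin Kp → ℕ) (z : Fin L → ℝ)
    (hsum : ∑ ℓ, z ℓ = (T : ℝ)) (hNp : ∑ k, Np k = T) :
    ∀ a : Option (Fin Kp), ∃ n : ℤ,
      ∑ ℓ ∈ Finset.univ.filter (fun ℓ => covf cp Np z ℓ = a), z ℓ = (n : ℝ) := by
  classical
  intro a
  match a with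
  | some k =>
    by_cases hk : (∑ ℓ' ∈ Finset.univ.filter (fun ℓ' => cp ℓ' = k), z ℓ') = (Np k : ℝ)
    · refine ⟨(Np k : ℤ), ?_⟩
      rw [covf_tight_filter cp Np z k hk, hk]
      push_cast
      ring
    · refine ⟨0, ?_⟩
      rw [Finset.filter_eq_empty_iff.mpr, Finset.sum_empty, Int.cast_zero]
      intro ℓ _
      rw [covf_eq_some]
      rintro ⟨rfl, ht⟩
      exact hk ht
  | none =>
    set tset := Finset.univ.filter
      (fun k : Fin Kp => (∑ ℓ' ∈ Finset.univ.filter (fun ℓ' => cp ℓ' = k), z ℓ') = (Np k : ℝ))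
      with htset
    refine ⟨(T : ℤ) - ∑ k ∈ tset, (Np k : ℤ), ?_⟩
    -- the `none` class is the set of units in non-tight categories
    have hclass : Finset.univ.filter (fun ℓ => covf cp Np z ℓ = none)
        = Finset.univ.filter (fun ℓ => cp ℓ ∉ tset) := by
      ext ℓ
      simp only [Finset.mem_filter, Finset.mem_univ, true_and, covf_eq_none, htset]
    -- fiberwise decomposition of the total sum
    have htot : ∑ k ∈ tset, (∑ ℓ ∈ Finset.univ.filter (fun ℓ => cp ℓ = k), z ℓ)
        + ∑ k ∈ tsetᶜ, (∑ ℓ ∈ Finset.univ.filter (fun ℓ => cp ℓ = k), z ℓ) = (T : ℝ) := by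
      rw [Finset.sum_add_sum_compl, Finset.sum_fiberwise, hsum]
    have htight : ∑ k ∈ tset, (∑ ℓ ∈ Finset.univ.filter (fun ℓ => cp ℓ = k), z ℓ)
        = ∑ k ∈ tset, (Np k : ℝ) := by
      refine Finset.sum_congr rfl fun k hk => ?_
      exact (Finset.mem_filter.mp hk).2
    have hgroup : ∑ k ∈ tsetᶜ, (∑ ℓ ∈ Finset.univ.filter (fun ℓ => cp ℓ = k), z ℓ)
        = ∑ ℓ ∈ Finset.univ.filter (fun ℓ => cp ℓ ∉ tset), z ℓ := by
      have hmaps : ∀ ℓ ∈ Finset.univ.filter (fun ℓ => cp ℓ ∉ tset), cp ℓ ∈ tsetᶜ := by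
        intro ℓ hℓ
        exact Finset.mem_compl.mpr (Finset.mem_filter.mp hℓ).2
      rw [← Finset.sum_fiberwise_of_maps_to hmaps z]
      refine Finset.sum_congr rfl fun k hk => ?_
      refine Finset.sum_congr ?_ (fun _ _ => rfl)
      ext ℓ
      simp only [Finset.mem_filter, Finset.mem_univ, true_and]
      have hk' : k ∉ tset := Finset.mem_compl.mp hk
      constructor
      · intro h2
        exact ⟨by rw [h2]; exact hk', h2⟩
      · rintro ⟨_, h2⟩
        exact h2
    rw [hclass, ← hgroup]
    push_cast
    linarith [htot, htight]

lemma aux_pert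
    (T L P : ℕ)
    (K : Fin P → ℕ)
    (c : ∀ p : Fin P, Fin L → Fin (K p))
    (N : ∀ p : Fin P, Fin (K p) → ℕ)
    (Q : Set ((Fin L → ℝ) × (∀ p : Fin P, Fin (K p) → ℝ)))
    (hQ : Q = {zv | (∀ ℓ, 0 ≤ zv.1 ℓ ∧ zv.1 ℓ ≤ 1) ∧
      (∑ ℓ, zv.1 ℓ) = (T : ℝ) ∧
      ∀ p k, |(∑ ℓ ∈ Finset.univ.filter (fun ℓ => c p ℓ = k), zv.1 ℓ) - (N p k : ℝ)|
        ≤ zv.2 p k})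
    (zv : (Fin L → ℝ) × (∀ p : Fin P, Fin (K p) → ℝ))
    (hzv : zv ∈ Set.extremePoints ℝ Q)
    (δ : Fin L → ℝ) (hδ : δ ≠ 0)
    (hsupp : ∀ ℓ, (zv.1 ℓ = 0 ∨ zv.1 ℓ = 1) → δ ℓ = 0)
    (htight : ∀ p k,
      (∑ ℓ ∈ Finset.univ.filter (fun ℓ => c p ℓ = k), zv.1 ℓ) = (N p k : ℝ) →
      (∑ ℓ ∈ Finset.univ.filter (fun ℓ => c p ℓ = k), δ ℓ) = 0)
    (hTot : ∑ ℓ, δ ℓ = 0) : False := by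
  classical
  obtain ⟨hzvQ, hext⟩ := hzv
  rw [hQ] at hzvQ
  obtain ⟨hbd, hsum, habs⟩ := hzvQ
  -- abbreviations
  set S : ∀ p : Fin P, Fin (K p) → ℝ :=
    fun p k => ∑ ℓ ∈ Finset.univ.filter (fun ℓ => c p ℓ = k), zv.1 ℓ with hSdef
  set Δ : ∀ p : Fin P, Fin (K p) → ℝ :=
    fun p k => ∑ ℓ ∈ Finset.univ.filter (fun ℓ => c p ℓ = k), δ ℓ with hΔdef
  set w : ∀ p : Fin P, Fin (K p) → ℝ :=
    fun p k => if (N p k : ℝ) ≤ S p k then Δ p k else -Δ p k with hwdef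
  -- find a suitable ε > 0
  have h1 : ∀ ℓ : Fin L, ∀ᶠ ε : ℝ in nhds 0,
      |ε * δ ℓ| ≤ zv.1 ℓ ∧ |ε * δ ℓ| ≤ 1 - zv.1 ℓ := by
    intro ℓ
    by_cases hδℓ : δ ℓ = 0
    · filter_upwards with ε
      simp [hδℓ, (hbd ℓ).1, (hbd ℓ).2]
    · have hfrac : ¬ (zv.1 ℓ = 0 ∨ zv.1 ℓ = 1) := fun h => hδℓ (hsupp ℓ h)
      push_neg at hfrac
      have h0 : 0 < zv.1 ℓ := lt_of_le_of_ne (hbd ℓ).1 (Ne.symm hfrac.1)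
      have h1' : zv.1 ℓ < 1 := lt_of_le_of_ne (hbd ℓ).2 hfrac.2
      have hten : Filter.Tendsto (fun ε : ℝ => |ε * δ ℓ|) (nhds 0) (nhds 0) := by
        have hid : Filter.Tendsto (fun x : ℝ => x) (nhds 0) (nhds 0) := Filter.tendsto_id
        have h' := hid.mul_const (δ ℓ)
        simpa using h'.abs
      have e1 := hten.eventually_lt_const h0
      have e2 := hten.eventually_lt_const (by linarith : (0:ℝ) < 1 - zv.1 ℓ)
      filter_upwards [e1, e2] with ε he1 he2
      exact ⟨le_of_lt he1, le_of_lt he2⟩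
  have h2 : ∀ p : Fin P, ∀ k : Fin (K p), ∀ᶠ ε : ℝ in nhds 0,
      ε * |Δ p k| ≤ |S p k - N p k| := by
    intro p k
    by_cases ht : S p k = (N p k : ℝ)
    · have hΔ0 : Δ p k = 0 := htight p k ht
      filter_upwards with ε
      simp [hΔ0, abs_nonneg]
    · have hpos : 0 < |S p k - N p k| := by
        rw [abs_pos]
        exact sub_ne_zero_of_ne ht
      have hten : Filter.Tendsto (fun ε : ℝ => ε * |Δ p k|) (nhds 0) (nhds 0) := by
        have hid : Filter.Tendsto (fun x : ℝ => x) (nhds 0) (nhds 0) := Filter.tendsto_id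
        have h' := hid.mul_const |Δ p k|
        simpa using h'
      have := hten.eventually_lt_const hpos
      filter_upwards [this] with ε he
      exact le_of_lt he
  have hev : ∀ᶠ ε : ℝ in nhds 0,
      (∀ ℓ, |ε * δ ℓ| ≤ zv.1 ℓ ∧ |ε * δ ℓ| ≤ 1 - zv.1 ℓ) ∧
      (∀ p : Fin P, ∀ k : Fin (K p), ε * |Δ p k| ≤ |S p k - N p k|) :=
    (Filter.eventually_all.mpr h1).and
      (Filter.eventually_all.mpr fun p => Filter.eventually_all.mpr (h2 p))
  obtain ⟨ε, hC, hε⟩ :=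
    ((hev.filter_mono (nhdsWithin_le_nhds (s := Set.Ioi (0:ℝ)))).and self_mem_nhdsWithin).exists
  -- the two perturbed points
  have hεpos : 0 < ε := hε
  have hmem : ∀ σ : ℝ, |σ| = 1 →
      ((fun ℓ => zv.1 ℓ + σ * (ε * δ ℓ)), (fun p k => zv.2 p k + σ * (ε * w p k))) ∈ Q := by
    intro σ hσ
    rw [hQ]
    refine ⟨?_, ?_, ?_⟩
    · intro ℓ
      obtain ⟨ha, hb⟩ := hC.1 ℓ
      have hn := neg_abs_le (σ * (ε * δ ℓ))
      have hp := le_abs_self (σ * (ε * δ ℓ))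
      have habs' : |σ * (ε * δ ℓ)| = |ε * δ ℓ| := by
        rw [abs_mul, hσ, one_mul]
      rw [habs'] at hn hp
      constructor
      · have := (hbd ℓ).1
        simp only
        linarith
      · have := (hbd ℓ).2
        simp only
        linarith
    · simp only
      rw [Finset.sum_add_distrib, hsum, ← Finset.mul_sum, ← Finset.mul_sum, hTot]
      ring
    · intro p k
      simp only
      have hsplit : ∑ ℓ ∈ Finset.univ.filter (fun ℓ => c p ℓ = k),
          (zv.1 ℓ + σ * (ε * δ ℓ)) = S p k + σ * ε * Δ p k := by
        rw [Finset.sum_add_distrib, ← Finset.mul_sum, ← Finset.mul_sum]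
        simp only [hSdef, hΔdef]
        ring
      rw [hsplit]
      have hC2 := hC.2 p k
      have hεΔ : |σ * ε * Δ p k| = ε * |Δ p k| := by
        rw [abs_mul, abs_mul, hσ, one_mul, abs_of_pos hεpos]
      have hup : σ * ε * Δ p k ≤ ε * |Δ p k| := by
        rw [← hεΔ]; exact le_abs_self _
      have hlo : -(ε * |Δ p k|) ≤ σ * ε * Δ p k := by
        rw [← hεΔ]; exact neg_abs_le _
      have hSN := habs p k
      by_cases hle : (N p k : ℝ) ≤ S p k
      · have hw : w p k = Δ p k := if_pos hle
        have habs2 : |S p k - (N p k : ℝ)| = S p k - N p k := abs_of_nonneg (by linarith)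
        rw [habs2] at hC2
        have hnn : 0 ≤ S p k + σ * ε * Δ p k - (N p k : ℝ) := by linarith
        rw [abs_of_nonneg hnn, hw]
        have : S p k - (N p k : ℝ) ≤ zv.2 p k := by
          calc S p k - (N p k : ℝ) = |S p k - (N p k : ℝ)| := habs2.symm
          _ ≤ zv.2 p k := hSN
        linarith [this]
      · push_neg at hle
        have hw : w p k = -Δ p k := if_neg (not_le.mpr hle)
        have habs2 : |S p k - (N p k : ℝ)| = (N p k : ℝ) - S p k := by
          rw [abs_of_neg (by linarith)]; ring
        rw [habs2] at hC2
        have hnp : S p k + σ * ε * Δ p k - (N p k : ℝ) ≤ 0 := by linarith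
        rw [abs_of_nonpos hnp, hw]
        have : (N p k : ℝ) - S p k ≤ zv.2 p k := by
          calc (N p k : ℝ) - S p k = |S p k - (N p k : ℝ)| := habs2.symm
          _ ≤ zv.2 p k := hSN
        linarith [this]
  have hx := hmem 1 (by norm_num)
  have hy := hmem (-1) (by norm_num)
  have hseg : zv ∈ openSegment ℝ
      ((fun ℓ => zv.1 ℓ + 1 * (ε * δ ℓ)), (fun p k => zv.2 p k + 1 * (ε * w p k)))
      ((fun ℓ => zv.1 ℓ + (-1) * (ε * δ ℓ)), (fun p k => zv.2 p k + (-1) * (ε * w p k))) := by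
    refine ⟨1/2, 1/2, by norm_num, by norm_num, by norm_num, ?_⟩
    refine Prod.ext ?_ ?_
    · funext ℓ
      show (1/2 : ℝ) * (zv.1 ℓ + 1 * (ε * δ ℓ)) + (1/2 : ℝ) * (zv.1 ℓ + (-1) * (ε * δ ℓ)) = zv.1 ℓ
      ring
    · funext p k
      show (1/2 : ℝ) * (zv.2 p k + 1 * (ε * w p k))
        + (1/2 : ℝ) * (zv.2 p k + (-1) * (ε * w p k)) = zv.2 p k
      ring
  have hxe := hext hx hy hseg
  apply hδ
  funext ℓ
  have := congrFun (congrArg Prod.fst hxe) ℓ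
  simp only at this
  have hεδ : ε * δ ℓ = 0 := by linarith
  have := mul_eq_zero.mp hεδ
  rcases this with h | h
  · exact absurd h (ne_of_gt hεpos)
  · exact h

lemma aux_vtight
    (T L P : ℕ)
    (K : Fin P → ℕ)
    (c : ∀ p : Fin P, Fin L → Fin (K p))
    (N : ∀ p : Fin P, Fin (K p) → ℕ)
    (Q : Set ((Fin L → ℝ) × (∀ p : Fin P, Fin (K p) → ℝ)))
    (hQ : Q = {zv | (∀ ℓ, 0 ≤ zv.1 ℓ ∧ zv.1 ℓ ≤ 1) ∧
      (∑ ℓ, zv.1 ℓ) = (T : ℝ) ∧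
      ∀ p k, |(∑ ℓ ∈ Finset.univ.filter (fun ℓ => c p ℓ = k), zv.1 ℓ) - (N p k : ℝ)|
        ≤ zv.2 p k})
    (zv : (Fin L → ℝ) × (∀ p : Fin P, Fin (K p) → ℝ))
    (hzv : zv ∈ Set.extremePoints ℝ Q) (p : Fin P) (k : Fin (K p)) :
    zv.2 p k = |(∑ ℓ ∈ Finset.univ.filter (fun ℓ => c p ℓ = k), zv.1 ℓ) - (N p k : ℝ)| := by
  classical
  obtain ⟨hzvQ, hext⟩ := hzv
  rw [hQ] at hzvQ
  obtain ⟨hbd, hsum, habs⟩ := hzvQ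
  by_contra hne
  set S := ∑ ℓ ∈ Finset.univ.filter (fun ℓ => c p ℓ = k), zv.1 ℓ with hSdef
  have hlt : |S - (N p k : ℝ)| < zv.2 p k := lt_of_le_of_ne (habs p k) (fun h => hne h.symm)
  set εv := zv.2 p k - |S - (N p k : ℝ)| with hεv
  have hεvpos : 0 < εv := by rw [hεv]; linarith
  set e : ∀ p' : Fin P, Fin (K p') → ℝ :=
    fun p' k' => if p'.1 = p.1 ∧ k'.1 = k.1 then εv else 0 with hedef
  have hepk : e p k = εv := if_pos ⟨rfl, rfl⟩
  have hxQ : ((zv.1, fun p' k' => zv.2 p' k' + e p' k') :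
      (Fin L → ℝ) × (∀ p' : Fin P, Fin (K p') → ℝ)) ∈ Q := by
    rw [hQ]
    refine ⟨hbd, hsum, ?_⟩
    intro p' k'
    by_cases h : p'.1 = p.1 ∧ k'.1 = k.1
    · have hp : p' = p := Fin.ext h.1
      subst hp
      have hk : k' = k := Fin.ext h.2
      subst hk
      show |S - (N p' k' : ℝ)| ≤ zv.2 p' k' + e p' k'
      rw [hepk]
      linarith [habs p' k']
    · have he0 : e p' k' = 0 := if_neg h
      show _ ≤ zv.2 p' k' + e p' k'
      rw [he0, add_zero]
      exact habs p' k'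
  have hyQ : ((zv.1, fun p' k' => zv.2 p' k' - e p' k') :
      (Fin L → ℝ) × (∀ p' : Fin P, Fin (K p') → ℝ)) ∈ Q := by
    rw [hQ]
    refine ⟨hbd, hsum, ?_⟩
    intro p' k'
    by_cases h : p'.1 = p.1 ∧ k'.1 = k.1
    · have hp : p' = p := Fin.ext h.1
      subst hp
      have hk : k' = k := Fin.ext h.2
      subst hk
      show |S - (N p' k' : ℝ)| ≤ zv.2 p' k' - e p' k'
      rw [hepk, hεv]
      linarith [habs p' k']
    · have he0 : e p' k' = 0 := if_neg h
      show _ ≤ zv.2 p' k' - e p' k'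
      rw [he0, sub_zero]
      exact habs p' k'
  have hseg : zv ∈ openSegment ℝ
      ((zv.1, fun p' k' => zv.2 p' k' + e p' k') :
        (Fin L → ℝ) × (∀ p' : Fin P, Fin (K p') → ℝ))
      ((zv.1, fun p' k' => zv.2 p' k' - e p' k')) := by
    refine ⟨1/2, 1/2, by norm_num, by norm_num, by norm_num, ?_⟩
    refine Prod.ext ?_ ?_
    · funext ℓ
      show (1/2 : ℝ) * zv.1 ℓ + (1/2 : ℝ) * zv.1 ℓ = zv.1 ℓ
      ring
    · funext p' k'
      show (1/2 : ℝ) * (zv.2 p' k' + e p' k') + (1/2 : ℝ) * (zv.2 p' k' - e p' k') = zv.2 p' k'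
      ring
  have hxe := hext hxQ hyQ hseg
  have := congrFun (congrFun (congrArg Prod.snd hxe) p) k
  simp only at this
  rw [hepk] at this
  linarith

/-- Proposition 2, case 1, reduced formulation: with at most two covariates, every
extreme point of the polyhedron `Q` is integral. -/
theorem prop2_case1_reduced_integral
    (T L P : ℕ) (hT : 0 < T) (hL : 0 < L) (hP : P ≤ 2)
    (K : Fin P → ℕ) (hK : ∀ p, 0 < K p)
    (c : ∀ p : Fin P, Fin L → Fin (K p))
    (N : ∀ p : Fin P, Fin (K p) → ℕ)
    (hN : ∀ p, ∑ k, N p k = T)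
    (Q : Set ((Fin L → ℝ) × (∀ p : Fin P, Fin (K p) → ℝ)))
    (hQ : Q = {zv | (∀ ℓ, 0 ≤ zv.1 ℓ ∧ zv.1 ℓ ≤ 1) ∧
      (∑ ℓ, zv.1 ℓ) = (T : ℝ) ∧
      ∀ p k, |(∑ ℓ ∈ Finset.univ.filter (fun ℓ => c p ℓ = k), zv.1 ℓ) - (N p k : ℝ)|
        ≤ zv.2 p k}) :
    ∀ zv ∈ Set.extremePoints ℝ Q,
      (∀ ℓ, zv.1 ℓ = 0 ∨ zv.1 ℓ = 1) ∧
      (∀ p k, ∃ n : ℤ, zv.2 p k = (n : ℝ)) := by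
  classical
  intro zv hzv
  have hzvQ := hzv.1
  rw [hQ] at hzvQ
  obtain ⟨hbd, hsum, habs⟩ := hzvQ
  -- Step 1: z is integral
  have hint : ∀ ℓ, zv.1 ℓ = 0 ∨ zv.1 ℓ = 1 := by
    by_contra hcon
    push_neg at hcon
    obtain ⟨ℓ0, h00, h01⟩ := hcon
    set F := Finset.univ.filter (fun ℓ => zv.1 ℓ ≠ 0 ∧ zv.1 ℓ ≠ 1) with hFdef
    have hFN : F.Nonempty := ⟨ℓ0, by simp [hFdef, h00, h01]⟩
    have hnotF : ∀ ℓ, ℓ ∉ F → (zv.1 ℓ = 0 ∨ zv.1 ℓ = 1) := by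
      intro ℓ hℓ
      by_contra hc
      push_neg at hc
      exact hℓ (by simp [hFdef, hc.1, hc.2])
    have hcard : ∀ (pr : Fin L → Prop) (inst : DecidablePred pr),
        (∃ n : ℤ, ∑ ℓ ∈ Finset.univ.filter pr, zv.1 ℓ = (n : ℝ)) →
        (F.filter pr).card ≠ 1 := by
      intro pr inst hex
      have h := aux_card_ne_one zv.1 hbd (Finset.univ.filter pr) hex
      rw [hFdef, Finset.filter_comm]
      convert h using 2
    have hTint : ∃ n : ℤ, ∑ ℓ ∈ Finset.univ.filter (fun _ : Fin L => True), zv.1 ℓ = (n : ℝ) := by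
      refine ⟨(T : ℤ), ?_⟩
      rw [Finset.filter_true]
      push_cast
      exact hsum
    have hP' : P = 0 ∨ P = 1 ∨ P = 2 := by omega
    rcases hP' with rfl | rfl | rfl
    · -- P = 0
      obtain ⟨δ, hδne, hδsupp, hfa, hgb⟩ :=
        aux_kernel F hFN (fun _ : Fin L => ()) (fun _ : Fin L => ()) ()
          (fun a => by
            have heq : F.filter (fun i => (fun _ : Fin L => ()) i = a)
                = F.filter (fun _ : Fin L => True) := by
              apply Finset.filter_congr
              intro i _
              simp
            rw [heq]
            have h2 := hcard (fun _ : Fin L => True) _ hTint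
            exact h2)
          (fun b hb => absurd rfl hb)
      refine aux_pert T L 0 K c N Q hQ zv hzv δ hδne
        (fun ℓ h => hδsupp ℓ (by simp [hFdef]; tauto)) (fun p => p.elim0) ?_
      have := hfa ()
      rw [show Finset.univ.filter (fun i : Fin L => (fun _ : Fin L => ()) i = ())
        = Finset.univ by simp] at this
      exact this
    · -- P = 1
      obtain ⟨δ, hδne, hδsupp, hfa, hgb⟩ :=
        aux_kernel F hFN (covf (c 0) (N 0) zv.1) (fun _ : Fin L => ()) ()
          (fun a => hcard _ _ (covf_int_sums (c 0) (N 0) zv.1 hsum (hN 0) a))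
          (fun b hb => absurd rfl hb)
      refine aux_pert T L 1 K c N Q hQ zv hzv δ hδne
        (fun ℓ h => hδsupp ℓ (by simp [hFdef]; tauto)) ?_ ?_
      · intro p k ht
        have hp : p = 0 := Subsingleton.elim p 0
        subst hp
        have := hfa (some k)
        rwa [covf_tight_filter (c 0) (N 0) zv.1 k ht] at this
      · rw [← Finset.sum_fiberwise Finset.univ (covf (c 0) (N 0) zv.1) δ]
        exact Finset.sum_eq_zero fun a _ => hfa a
    · -- P = 2
      obtain ⟨δ, hδne, hδsupp, hfa, hgb⟩ :=
        aux_kernel F hFN (covf (c 0) (N 0) zv.1) (covf (c 1) (N 1) zv.1) none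
          (fun a => hcard _ _ (covf_int_sums (c 0) (N 0) zv.1 hsum (hN 0) a))
          (fun b _ => hcard _ _ (covf_int_sums (c 1) (N 1) zv.1 hsum (hN 1) b))
      refine aux_pert T L 2 K c N Q hQ zv hzv δ hδne
        (fun ℓ h => hδsupp ℓ (by simp [hFdef]; tauto)) ?_ ?_
      · have ht0 : ∀ k, (∑ ℓ ∈ Finset.univ.filter (fun ℓ => c 0 ℓ = k), zv.1 ℓ)
            = (N 0 k : ℝ) → (∑ ℓ ∈ Finset.univ.filter (fun ℓ => c 0 ℓ = k), δ ℓ) = 0 := by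
          intro k ht
          have := hfa (some k)
          rwa [covf_tight_filter (c 0) (N 0) zv.1 k ht] at this
        have ht1 : ∀ k, (∑ ℓ ∈ Finset.univ.filter (fun ℓ => c 1 ℓ = k), zv.1 ℓ)
            = (N 1 k : ℝ) → (∑ ℓ ∈ Finset.univ.filter (fun ℓ => c 1 ℓ = k), δ ℓ) = 0 := by
          intro k ht
          have := hgb (some k)
          rwa [covf_tight_filter (c 1) (N 1) zv.1 k ht] at this
        intro p
        have h01 : p = 0 ∨ p = 1 := by
          obtain ⟨pv, hpv⟩ := p
          interval_cases pv
          · exact Or.inl (Fin.ext rfl)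
          · exact Or.inr (Fin.ext rfl)
        rcases h01 with rfl | rfl
        · exact ht0
        · exact ht1
      · rw [← Finset.sum_fiberwise Finset.univ (covf (c 0) (N 0) zv.1) δ]
        exact Finset.sum_eq_zero fun a _ => hfa a
  -- Step 2: v is integral
  refine ⟨hint, fun p k => ?_⟩
  obtain ⟨m, hm⟩ := aux_sum_int (Finset.univ.filter (fun ℓ => c p ℓ = k)) zv.1
    (fun ℓ _ => hint ℓ)
  refine ⟨|m - (N p k : ℤ)|, ?_⟩
  rw [aux_vtight T L P K c N Q hQ zv hzv p k, hm, Int.cast_abs]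
  push_cast
  ring_nf
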